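/- Fix $y_0 \in \mathbb{Q}^* \setminus \{1\}$ and $m \geq 1$, and consider $\rho_m(Z, T) := (Z - y_0)\bar h_m(T) + y_0 T \bar k_m(T)$ as a polynomial in $T$ over the field $\mathbb{Q}(Z)$. Then every irreducible factor of $\rho_m$ in $\mathbb{Q}(Z)[T]$ has degree at least $2$ in $T$. -/

import Mathlib

open Polynomial

noncomputable section StmtAux

/-- Homogenization of `f` at `(u, v)` with total degree `n`. -/
private def homog (f u v : ℚ[X]) (n : ℕ) : ℚ[X] :=
  ∑ i ∈ Finset.range (n + 1), C (f.coeff i) * u ^ i * v ^ (n - i)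

private lemma homog_spec (f u v : ℚ[X]) (n : ℕ) (hn : f.natDegree ≤ n)
    (q : RatFunc ℚ)
    (hq : q * algebraMap ℚ[X] (RatFunc ℚ) v = algebraMap ℚ[X] (RatFunc ℚ) u) :
    algebraMap ℚ[X] (RatFunc ℚ) (homog f u v n)
      = (algebraMap ℚ[X] (RatFunc ℚ) v) ^ n * Polynomial.aeval q f := by
  rw [Polynomial.aeval_eq_sum_range' (lt_of_le_of_lt hn (Nat.lt_succ_self n)), Finset.mul_sum,
    homog, map_sum]
  refine Finset.sum_congr rfl fun i hi => ?_
  rw [Finset.mem_range, Nat.lt_succ_iff] at hi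
  rw [map_mul, map_mul, map_pow, map_pow, Algebra.smul_def]
  have h1 : algebraMap ℚ[X] (RatFunc ℚ) (C (f.coeff i))
      = algebraMap ℚ (RatFunc ℚ) (f.coeff i) := by
    rw [← Polynomial.algebraMap_eq, ← IsScalarTower.algebraMap_apply]
  have h2 : (algebraMap ℚ[X] (RatFunc ℚ) v) ^ n
      = (algebraMap ℚ[X] (RatFunc ℚ) v) ^ i * (algebraMap ℚ[X] (RatFunc ℚ) v) ^ (n - i) := by
    rw [← pow_add, Nat.add_sub_cancel' hi]
  rw [h1, h2, ← hq, mul_pow]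
  ring

private lemma homog_mul {u v : ℚ[X]} (hv : v ≠ 0) {f g : ℚ[X]} {nf ng : ℕ}
    (hf : f.natDegree ≤ nf) (hg : g.natDegree ≤ ng) :
    homog (f * g) u v (nf + ng) = homog f u v nf * homog g u v ng := by
  apply RatFunc.algebraMap_injective ℚ
  set q : RatFunc ℚ := algebraMap ℚ[X] (RatFunc ℚ) u / algebraMap ℚ[X] (RatFunc ℚ) v with hqdef
  have hq : q * algebraMap ℚ[X] (RatFunc ℚ) v = algebraMap ℚ[X] (RatFunc ℚ) u :=
    div_mul_cancel₀ _ (RatFunc.algebraMap_ne_zero hv)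
  simp only [map_mul]
  rw [homog_spec (f * g) u v (nf + ng) (le_trans (natDegree_mul_le) (add_le_add hf hg)) q hq,
    homog_spec f u v nf hf q hq, homog_spec g u v ng hg q hq, map_mul, pow_add]
  ring

private lemma homog_add (u v : ℚ[X]) (n : ℕ) (f g : ℚ[X]) :
    homog (f + g) u v n = homog f u v n + homog g u v n := by
  rw [homog, homog, homog, ← Finset.sum_add_distrib]
  refine Finset.sum_congr rfl fun i _ => ?_
  rw [coeff_add, C_add]
  ring

private lemma homog_one (u v : ℚ[X]) (n : ℕ) : homog 1 u v n = v ^ n := by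
  rw [homog, Finset.sum_eq_single 0]
  · simp
  · intro i _ hne
    simp [Polynomial.coeff_one, hne]
  · intro habs
    exact absurd (Finset.mem_range.mpr (Nat.succ_pos n)) habs

private lemma homog_comp {f : ℚ[X]} (u : ℚ[X]) {n : ℕ} (hn : f.natDegree ≤ n) :
    homog f u 1 n = f.comp u := by
  rw [Polynomial.comp, eval₂_eq_sum_range' (C : ℚ →+* ℚ[X])
    (lt_of_le_of_lt hn (Nat.lt_succ_self n)) u, homog]
  refine Finset.sum_congr rfl fun i _ => ?_
  rw [one_pow, mul_one]

private lemma hk_step {hm km hm1 : ℚ[X]} {m : ℕ}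
    (hrec : hm1 = hm - X * km)
    (hdk : km.degree = (m : ℕ)) (hlk : km.leadingCoeff = (-1) ^ m)
    (hdh : hm.degree ≤ (m : ℕ)) :
    hm1.degree = ((m + 1 : ℕ) : WithBot ℕ) ∧ hm1.leadingCoeff = (-1) ^ (m + 1) := by
  have hdXk : (-(X * km)).degree = ((m + 1 : ℕ) : WithBot ℕ) := by
    rw [degree_neg, degree_mul, degree_X, hdk, Nat.cast_add, Nat.cast_one, add_comm]
  have hlt : hm.degree < (-(X * km)).degree := by
    rw [hdXk]
    refine lt_of_le_of_lt hdh ?_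
    exact_mod_cast Nat.lt_succ_self m
  have hrw : hm1 = hm + -(X * km) := by rw [hrec]; ring
  constructor
  · rw [hrw, degree_add_eq_right_of_degree_lt hlt, hdXk]
  · rw [hrw, leadingCoeff_add_of_degree_lt hlt, leadingCoeff_neg, leadingCoeff_mul,
      leadingCoeff_X, one_mul, hlk, pow_succ]
    ring

private lemma hk_facts (y0 : ℚ) (h k : ℕ → ℚ[X])
    (hh0 : h 0 = C (1 - y0)) (hk0 : k 0 = 1)
    (hh : ∀ m, h (m + 1) = h m - X * k m)
    (hk : ∀ m, k (m + 1) = h m + (1 - X) * k m) :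
    ∀ m, (k m).degree = (m : ℕ) ∧ (k m).leadingCoeff = (-1) ^ m
      ∧ (h m).degree ≤ (m : ℕ) := by
  intro m
  induction m with
  | zero => refine ⟨by simp [hk0], by simp [hk0], by rw [hh0, Nat.cast_zero]; exact degree_C_le⟩
  | succ n ih =>
    obtain ⟨hdk, hlk, hdh⟩ := ih
    have hX1 : (1 - X : ℚ[X]) = -(X - C 1) := by rw [C_1]; ring
    have hd1X : (1 - X : ℚ[X]).degree = 1 := by rw [hX1, degree_neg, degree_X_sub_C]
    have hl1X : (1 - X : ℚ[X]).leadingCoeff = -1 := by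
      rw [hX1, leadingCoeff_neg, (monic_X_sub_C (1 : ℚ)).leadingCoeff]
    have hkne : k n ≠ 0 := leadingCoeff_ne_zero.mp
      (by rw [hlk]; exact pow_ne_zero _ (neg_ne_zero.mpr one_ne_zero))
    have hdt : ((1 - X) * k n).degree = ((n + 1 : ℕ) : WithBot ℕ) := by
      rw [degree_mul, hd1X, hdk, Nat.cast_add, Nat.cast_one, add_comm]
    have hlt : (h n).degree < ((1 - X) * k n).degree := by
      rw [hdt]
      refine lt_of_le_of_lt hdh ?_
      exact_mod_cast Nat.lt_succ_self n
    refine ⟨?_, ?_, ?_⟩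
    · rw [hk n, degree_add_eq_right_of_degree_lt hlt, hdt]
    · rw [hk n, leadingCoeff_add_of_degree_lt hlt, leadingCoeff_mul, hl1X, hlk, pow_succ]
      ring
    · exact le_of_eq (hk_step (hh n) hdk hlk hdh).1

private lemma h_coeff0 (y0 : ℚ) (h k : ℕ → ℚ[X])
    (hh0 : h 0 = C (1 - y0))
    (hh : ∀ m, h (m + 1) = h m - X * k m) :
    ∀ m, (h m).coeff 0 = 1 - y0 := by
  intro m
  induction m with
  | zero => simp [hh0]
  | succ n ih =>
    rw [hh n, coeff_sub, mul_coeff_zero, coeff_X_zero, zero_mul, sub_zero, ih]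

private lemma hk_coprime (y0 : ℚ) (h k : ℕ → ℚ[X])
    (hh0 : h 0 = C (1 - y0)) (hk0 : k 0 = 1)
    (hh : ∀ m, h (m + 1) = h m - X * k m)
    (hk : ∀ m, k (m + 1) = h m + (1 - X) * k m) :
    ∀ m, IsCoprime (h m) (k m) := by
  intro m
  induction m with
  | zero => rw [hk0]; exact isCoprime_one_right
  | succ n ih =>
    obtain ⟨a, b, hab⟩ := ih
    refine ⟨a * (1 - X) - b, a * X + b, ?_⟩
    rw [hh n, hk n]
    linear_combination hab

private lemma hh_coprime (y0 : ℚ) (hy0' : y0 ≠ 1) (h k : ℕ → ℚ[X])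
    (hh0 : h 0 = C (1 - y0)) (hk0 : k 0 = 1)
    (hh : ∀ m, h (m + 1) = h m - X * k m)
    (hk : ∀ m, k (m + 1) = h m + (1 - X) * k m) :
    ∀ m, IsCoprime (h m) (h (m + 1)) := by
  intro m
  obtain ⟨a, b, hab⟩ := hk_coprime y0 h k hh0 hk0 hh hk m
  have hc0 : (h m).coeff 0 = 1 - y0 := h_coeff0 y0 h k hh0 hh m
  have hc0ne : (1 - y0 : ℚ) ≠ 0 := sub_ne_zero.mpr fun habs => hy0' habs.symm
  set g := (h m).divX with hg
  have hdivX : X * g + C (1 - y0) = h m := by rw [hg, ← hc0, X_mul_divX_add]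
  refine ⟨C (1 - y0)⁻¹ * (1 - (a * X + b) * g), C (1 - y0)⁻¹ * (b * g), ?_⟩
  have key : (C (1 - y0)⁻¹ * (1 - (a * X + b) * g)) * h m
      + (C (1 - y0)⁻¹ * (b * g)) * h (m + 1) = C (1 - y0)⁻¹ * C (1 - y0) := by
    rw [hh m]
    linear_combination (-(C (1 - y0)⁻¹ * g * X)) * hab + (-(C (1 - y0)⁻¹)) * hdivX
  rw [key, ← C_mul, inv_mul_cancel₀ hc0ne, C_1]

end StmtAux

theorem stmt_15
    (y0 : ℚ) (hy0 : y0 ≠ 0) (hy0' : y0 ≠ 1)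
    (h k : ℕ → Polynomial ℚ)
    (hh0 : h 0 = Polynomial.C (1 - y0)) (hk0 : k 0 = 1)
    (hh : ∀ m, h (m + 1) = h m - Polynomial.X * k m)
    (hk : ∀ m, k (m + 1) = h m + (1 - Polynomial.X) * k m)
    (ρ : ℕ → Polynomial (RatFunc ℚ))
    (hρ : ∀ m, ρ m = Polynomial.C (RatFunc.X - RatFunc.C y0)
        * Polynomial.map (RatFunc.C : ℚ →+* RatFunc ℚ) (h m)
      + Polynomial.C (RatFunc.C y0) * Polynomial.X
        * Polynomial.map (RatFunc.C : ℚ →+* RatFunc ℚ) (k m)) :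
    ∀ m : ℕ, 1 ≤ m → ∀ p : Polynomial (RatFunc ℚ),
      Irreducible p → p ∣ ρ m → 2 ≤ p.natDegree := by
  classical
  intro m hm p hp hdvd
  by_contra hdeg
  push_neg at hdeg
  have hpne : p ≠ 0 := hp.ne_zero
  have hd1 : p.natDegree = 1 := by
    have h01 : p.natDegree = 0 ∨ p.natDegree = 1 := by omega
    rcases h01 with h0 | h1
    · exfalso
      have hc := Polynomial.eq_C_of_natDegree_eq_zero h0
      have hcne : p.coeff 0 ≠ 0 := fun hz => hpne (by rw [hc, hz, map_zero])
      exact hp.not_isUnit (hc ▸ Polynomial.isUnit_C.mpr (isUnit_iff_ne_zero.mpr hcne))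
    · exact h1
  obtain ⟨a, ha, b, hab⟩ := Polynomial.natDegree_eq_one.mp hd1
  set q : RatFunc ℚ := -b / a with hqdef
  have hroot : Polynomial.eval q p = 0 := by
    rw [← hab, eval_add, eval_mul, eval_C, eval_X, eval_C, hqdef]
    field_simp
    ring
  have hρ0 : Polynomial.eval q (ρ m) = 0 := by
    obtain ⟨c, hc⟩ := hdvd
    rw [hc, eval_mul, hroot, zero_mul]
  have haev : ∀ f : ℚ[X], Polynomial.eval₂ (RatFunc.C : ℚ →+* RatFunc ℚ) q f
      = Polynomial.aeval q f := fun f => by rw [Polynomial.aeval_def, Subsingleton.elim (algebraMap ℚ (RatFunc ℚ)) RatFunc.C]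
  rw [hρ m] at hρ0
  simp only [eval_add, eval_mul, eval_C, eval_X, Polynomial.eval_map] at hρ0
  rw [haev, haev] at hρ0
  set A := Polynomial.aeval q (h m) with hA
  set B := Polynomial.aeval q (k m) with hB
  set A' := Polynomial.aeval q (h (m + 1)) with hA'
  have hrecA : A' = A - q * B := by
    rw [hA', hh m, map_sub, map_mul, Polynomial.aeval_X, hA, hB]
  have E1 : RatFunc.X * A = RatFunc.C y0 * A' := by
    rw [hrecA]; linear_combination hρ0
  have hCinj : Function.Injective (RatFunc.C : ℚ →+* RatFunc ℚ) := RingHom.injective _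
  have hCy0ne : (RatFunc.C y0 : RatFunc ℚ) ≠ 0 := fun h0 => hy0 (hCinj (by rw [h0, map_zero]))
  have h1y0 : (1 - y0 : ℚ) ≠ 0 := sub_ne_zero.mpr fun habs => hy0' habs.symm
  have hkcop := hk_coprime y0 h k hh0 hk0 hh hk m
  have hA'ne : A' ≠ 0 := by
    intro h0
    have hA0 : A = 0 := by
      have t := E1
      rw [h0, mul_zero] at t
      exact (mul_eq_zero.mp t).resolve_left RatFunc.X_ne_zero
    have hqB : q * B = 0 := by
      have t := hrecA
      rw [h0, hA0, zero_sub] at t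
      exact neg_eq_zero.mp t.symm
    have hBne : B ≠ 0 := by
      intro hB0
      obtain ⟨a2, b2, hab2⟩ := hkcop
      have t := congrArg (Polynomial.aeval q) hab2
      rw [map_add, map_mul, map_mul, map_one, ← hA, ← hB, hA0, hB0, mul_zero, mul_zero,
        add_zero] at t
      exact zero_ne_one t
    have hq0 : q = 0 := (mul_eq_zero.mp hqB).resolve_right hBne
    have hAval : A = RatFunc.C (1 - y0) := by
      rw [hA, hq0, Polynomial.aeval_def, Polynomial.eval₂_at_zero,
        h_coeff0 y0 h k hh0 hh m, Subsingleton.elim (algebraMap ℚ (RatFunc ℚ)) RatFunc.C]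
    rw [hAval] at hA0
    exact h1y0 (hCinj (by rw [hA0, map_zero]))
  have hAne : A ≠ 0 := by
    intro h0
    have t := E1
    rw [h0, mul_zero] at t
    exact hA'ne ((mul_eq_zero.mp t.symm).resolve_left hCy0ne)
  -- pass to polynomials over ℚ via homogenization at (num, denom)
  set u := q.num with hu
  set v := q.denom with hv
  have hvne : v ≠ 0 := RatFunc.denom_ne_zero q
  have hφv : algebraMap ℚ[X] (RatFunc ℚ) v ≠ 0 := RatFunc.algebraMap_ne_zero hvne
  have hq : q * algebraMap ℚ[X] (RatFunc ℚ) v = algebraMap ℚ[X] (RatFunc ℚ) u := by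
    have e : q = algebraMap ℚ[X] (RatFunc ℚ) u / algebraMap ℚ[X] (RatFunc ℚ) v :=
      (RatFunc.num_div_denom q).symm
    rw [e]
    exact div_mul_cancel₀ _ hφv
  obtain ⟨hdkm, hlkm, hdhm⟩ := hk_facts y0 h k hh0 hk0 hh hk m
  have hdh' := hk_step (hh m) hdkm hlkm hdhm
  have hndh : (h m).natDegree ≤ m := Polynomial.natDegree_le_iff_degree_le.mpr hdhm
  have hndh' : (h (m + 1)).natDegree = m + 1 := Polynomial.natDegree_eq_of_degree_eq_some hdh'.1
  set Hs := homog (h m) u v m with hHs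
  set H's := homog (h (m + 1)) u v (m + 1) with hH's
  have hφHs : algebraMap ℚ[X] (RatFunc ℚ) Hs = (algebraMap ℚ[X] (RatFunc ℚ) v) ^ m * A :=
    homog_spec _ _ _ _ hndh q hq
  have hφH's : algebraMap ℚ[X] (RatFunc ℚ) H's
      = (algebraMap ℚ[X] (RatFunc ℚ) v) ^ (m + 1) * A' :=
    homog_spec _ _ _ _ (le_of_eq hndh') q hq
  have E2 : (X : ℚ[X]) * (v * Hs) = C y0 * H's := by
    apply RatFunc.algebraMap_injective ℚ
    rw [map_mul, map_mul, map_mul, RatFunc.algebraMap_X, RatFunc.algebraMap_C, hφHs, hφH's,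
      pow_succ]
    linear_combination (algebraMap ℚ[X] (RatFunc ℚ) v ^ m
      * algebraMap ℚ[X] (RatFunc ℚ) v) * E1
  have hHsne : Hs ≠ 0 := by
    intro h0
    have t := hφHs
    rw [h0, map_zero] at t
    exact hAne ((mul_eq_zero.mp t.symm).resolve_left (pow_ne_zero _ hφv))
  have hH'sne : H's ≠ 0 := by
    intro h0
    have t := hφH's
    rw [h0, map_zero] at t
    exact hA'ne ((mul_eq_zero.mp t.symm).resolve_left (pow_ne_zero _ hφv))
  -- Bezout identity between the homogenizations
  obtain ⟨a2, b2, hab2⟩ := hh_coprime y0 hy0' h k hh0 hk0 hh hk m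
  set nb := max a2.natDegree b2.natDegree with hnb
  have hbez : homog a2 u v (nb + 1) * Hs + homog b2 u v nb * H's = v ^ (nb + 1 + m) := by
    have e1 : homog (a2 * h m) u v (nb + 1 + m) = homog a2 u v (nb + 1) * Hs :=
      homog_mul hvne (le_trans (le_max_left _ _) (Nat.le_succ nb)) hndh
    have e2 : homog (b2 * h (m + 1)) u v (nb + (m + 1)) = homog b2 u v nb * H's :=
      homog_mul hvne (le_max_right a2.natDegree b2.natDegree) (le_of_eq hndh')
    have e3 : nb + (m + 1) = nb + 1 + m := by omega
    rw [e3] at e2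
    rw [← e1, ← e2, ← homog_add, hab2, homog_one]
  -- v is coprime to the homogenization of h (m+1)
  have hcuv : IsCoprime v u := (RatFunc.isCoprime_num_denom q).symm
  have hlam : (h (m + 1)).coeff (m + 1) = (-1 : ℚ) ^ (m + 1) := by
    have e := Polynomial.coeff_natDegree (p := h (m + 1))
    rw [hndh'] at e
    rw [e]
    exact hdh'.2
  set W := ∑ i ∈ Finset.range (m + 1), C ((h (m + 1)).coeff i) * u ^ i * v ^ (m - i) with hW
  have hsplit : H's = C ((-1 : ℚ) ^ (m + 1)) * u ^ (m + 1) + v * W := by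
    rw [hH's, homog, Finset.sum_range_succ, hlam, Nat.sub_self, pow_zero, mul_one, hW,
      Finset.mul_sum, add_comm]
    congr 1
    refine Finset.sum_congr rfl fun i hi => ?_
    rw [Finset.mem_range] at hi
    have e : m + 1 - i = (m - i) + 1 := by omega
    rw [e, pow_succ]
    ring
  have hC1 : IsCoprime v H's := by
    rw [hsplit]
    have hunit : IsCoprime v (C ((-1 : ℚ) ^ (m + 1))) :=
      ⟨0, C (((-1 : ℚ) ^ (m + 1))⁻¹), by
        rw [zero_mul, zero_add, ← C_mul,
          inv_mul_cancel₀ (pow_ne_zero _ (neg_ne_zero.mpr one_ne_zero)), C_1]⟩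
    exact (hunit.mul_right (hcuv.pow_right)).add_mul_left_right W
  -- v * Hs and H's are coprime
  have hcop : IsCoprime (v * Hs) H's := by
    rw [← EuclideanDomain.gcd_isUnit_iff]
    by_contra hgu
    have hg0 : EuclideanDomain.gcd (v * Hs) H's ≠ 0 := fun h0 =>
      hH'sne (EuclideanDomain.gcd_eq_zero_iff.mp h0).2
    obtain ⟨π, hπirr, hπdvd⟩ := WfDvdMonoid.exists_irreducible_factor hgu hg0
    have hπprime : Prime π := (UniqueFactorizationMonoid.irreducible_iff_prime).mp hπirr
    have hd1' : π ∣ v * Hs := hπdvd.trans (EuclideanDomain.gcd_dvd_left _ _)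
    have hd2' : π ∣ H's := hπdvd.trans (EuclideanDomain.gcd_dvd_right _ _)
    have hπv : π ∣ v := by
      rcases hπprime.2.2 _ _ hd1' with hc | hc
      · exact hc
      · refine hπprime.dvd_of_dvd_pow (n := nb + 1 + m) ?_
        rw [← hbez]
        exact dvd_add (hc.mul_left _) (hd2'.mul_left _)
    exact hπirr.not_isUnit (hC1.isUnit_of_dvd' hπv hd2')
  -- conclude
  have hdvdC : v * Hs ∣ C y0 := hcop.dvd_of_dvd_mul_right ⟨X, by linear_combination -E2⟩
  have hvHsu : IsUnit (v * Hs) :=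
    isUnit_of_dvd_unit hdvdC (Polynomial.isUnit_C.mpr (isUnit_iff_ne_zero.mpr hy0))
  have hvu : IsUnit v := isUnit_of_mul_isUnit_left hvHsu
  have hv1 : v = 1 := (RatFunc.monic_denom q).eq_one_of_isUnit hvu
  have hnd : (1 : ℕ) = (H's).natDegree := by
    have e := congrArg Polynomial.natDegree E2
    rw [Polynomial.natDegree_mul Polynomial.X_ne_zero (mul_ne_zero hvne hHsne),
      Polynomial.natDegree_mul (Polynomial.C_ne_zero.mpr hy0) hH'sne,
      Polynomial.natDegree_X, Polynomial.natDegree_C,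
      Polynomial.natDegree_eq_zero_of_isUnit hvHsu] at e
    simpa using e
  have hcomp : H's = (h (m + 1)).comp u := by
    rw [hH's, hv1, homog_comp u (le_of_eq hndh')]
  rw [hcomp, Polynomial.natDegree_comp, hndh'] at hnd
  have : m + 1 ≤ 1 := Nat.le_of_dvd one_pos ⟨u.natDegree, hnd⟩
  omega
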